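/- Every rooted cycle basis of the n-vertex ladder graph (the product of a path with K_2), rooted at one of its end rungs, has total length Ω(n^2): the sum of the lengths of all basis cycles is at least a constant times n^2. -/

import Mathlib

open SimpleGraph

/-- A cycle in `G`: a (finite) connected `2`-regular subgraph. -/
def IsCycleSubgraph {V : Type*} {G : SimpleGraph V} (C : G.Subgraph) : Prop :=
  C.verts.Finite ∧ C.Connected ∧ ∀ v ∈ C.verts, (C.neighborSet v).ncard = 2

open Classical in
/-- The characteristic vector over `𝔽₂` of the edge set of a subgraph. -/
noncomputable def edgeVec {V : Type*} {G : SimpleGraph V} (C : G.Subgraph) :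
    Sym2 V → ZMod 2 :=
  fun e => if e ∈ C.edgeSet then 1 else 0

/-- The cycle space of `G`: the `𝔽₂`-span of the edge vectors of cycles of `G`. -/
noncomputable def cycleSpace {V : Type*} (G : SimpleGraph V) :
    Submodule (ZMod 2) (Sym2 V → ZMod 2) :=
  Submodule.span (ZMod 2) (edgeVec '' {C : G.Subgraph | IsCycleSubgraph C})

/-- A cycle basis of `G`: a set of cycles whose edge vectors form a basis of the
cycle space of `G`. -/
def IsCycleBasis {V : Type*} {G : SimpleGraph V} (B : Set G.Subgraph) : Prop :=
  (∀ C ∈ B, IsCycleSubgraph C) ∧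
  LinearIndependent (ZMod 2) (fun C : B => edgeVec C.1) ∧
  Submodule.span (ZMod 2) (edgeVec '' B) = cycleSpace G

/-- A graph is `2`-vertex-connected if it has at least three vertices and deleting
any single vertex leaves it connected. -/
def TwoConnected {V : Type*} (G : SimpleGraph V) : Prop :=
  3 ≤ Nat.card V ∧ ∀ v : V, (G.induce ({v}ᶜ : Set V)).Connected

/-- The ladder graph `P_k × K_2`: vertices `(i, s)` for `i : Fin k` and
`s : Bool`, with rung edges `{(i, false), (i, true)}` and path edges between
consecutive indices on each side. -/
def ladder (k : ℕ) : SimpleGraph (Fin k × Bool) :=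
  SimpleGraph.fromRel fun p q =>
    (p.1 = q.1 ∧ p.2 ≠ q.2) ∨ (p.2 = q.2 ∧ (p.1 : ℕ) + 1 = (q.1 : ℕ))


namespace Stmt15
variable {k : ℕ}

abbrev V (k : ℕ) := Fin (k + 1) × Bool

/-- classification of ladder adjacency -/
lemma adj_cases {p q : V k} (h : (ladder (k+1)).Adj p q) :
    (q.1 = p.1 ∧ q.2 = !p.2) ∨
      (q.2 = p.2 ∧ ((q.1 : ℕ) = (p.1 : ℕ) + 1 ∨ (p.1 : ℕ) = (q.1 : ℕ) + 1)) := by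
  rw [ladder, SimpleGraph.fromRel_adj] at h
  obtain ⟨hne, h | h⟩ := h
  · rcases h with ⟨h1, h2⟩ | ⟨h1, h2⟩
    · exact Or.inl ⟨h1.symm, by cases hp : p.2 <;> cases hq : q.2 <;> simp_all⟩
    · exact Or.inr ⟨h1.symm, Or.inl h2.symm⟩
  · rcases h with ⟨h1, h2⟩ | ⟨h1, h2⟩
    · exact Or.inl ⟨h1, by cases hp : p.2 <;> cases hq : q.2 <;> simp_all⟩
    · exact Or.inr ⟨h1, Or.inr h2.symm⟩

lemma adj_rung (i : Fin (k+1)) (s : Bool) : (ladder (k+1)).Adj (i, s) (i, !s) := by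
  rw [ladder, SimpleGraph.fromRel_adj]
  refine ⟨by simp, Or.inl (Or.inl ⟨rfl, by simp⟩)⟩

lemma adj_side {i j : Fin (k+1)} (h : (i : ℕ) + 1 = (j : ℕ)) (s : Bool) :
    (ladder (k+1)).Adj (i, s) (j, s) := by
  rw [ladder, SimpleGraph.fromRel_adj]
  refine ⟨?_, Or.inl (Or.inr ⟨rfl, h⟩)⟩
  intro hc
  have : i = j := congrArg Prod.fst hc
  omega

open Classical in
noncomputable def incEdges (v : V k) : Finset (Sym2 (V k)) :=
  Finset.univ.filter (fun e => v ∈ e)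

lemma pmk {α β : Type*} {w : α × β} {a : α} {b : β} (h1 : w.1 = a) (h2 : w.2 = b) :
    w = (a, b) := by
  cases w; cases h1; cases h2; rfl

lemma mem_incEdges {v : V k} {e : Sym2 (V k)} : e ∈ incEdges v ↔ v ∈ e := by
  classical simp [incEdges]


/-- the parity functional at a vertex -/
noncomputable def phi (v : V k) : (Sym2 (V k) → ZMod 2) →ₗ[ZMod 2] ZMod 2 :=
  ∑ e ∈ incEdges v, LinearMap.proj e

lemma phi_apply (v : V k) (x : Sym2 (V k) → ZMod 2) :
    phi v x = ∑ e ∈ incEdges v, x e := by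
  simp [phi]

lemma parity_cycle {C : (ladder (k+1)).Subgraph} (hC : IsCycleSubgraph C) (v : V k) :
    phi v (edgeVec C) = 0 := by
  classical
  rw [phi_apply]
  have h1 : ∑ e ∈ incEdges v, edgeVec C e =
      (((incEdges v).filter (fun e => e ∈ C.edgeSet)).card : ZMod 2) := by
    simp only [edgeVec]
    exact Finset.sum_boole _ _
  rw [h1]
  have h2 : (Finset.univ.filter (fun w => C.Adj v w)).card =
      ((incEdges v).filter (fun e => e ∈ C.edgeSet)).card := by
    apply Finset.card_bij (fun w _ => s(v, w))
    · intro w hw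
      simp only [Finset.mem_filter, mem_incEdges] at *
      exact ⟨Sym2.mem_mk_left _ _, SimpleGraph.Subgraph.mem_edgeSet.2 hw.2⟩
    · intro w hw w' hw' hww
      exact (Sym2.congr_right).1 hww
    · intro e he
      simp only [Finset.mem_filter, mem_incEdges] at he
      induction e with
      | _ a b =>
        rcases Sym2.mem_iff.1 he.1 with rfl | rfl
        · exact ⟨b, by simpa using SimpleGraph.Subgraph.mem_edgeSet.1 he.2, rfl⟩
        · refine ⟨a, by simpa using (SimpleGraph.Subgraph.mem_edgeSet.1 he.2).symm, Sym2.eq_swap⟩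
  rw [← h2]
  by_cases hv : v ∈ C.verts
  · have h3 : (Finset.univ.filter (fun w => C.Adj v w)).card = (C.neighborSet v).ncard := by
      rw [Set.ncard_eq_toFinset_card']
      congr 1
      ext w
      simp [SimpleGraph.Subgraph.neighborSet]
      convert (Set.mem_toFinset (s := {w | C.Adj v w}) (a := w)).symm
      · exact Iff.rfl
      · exact congrArg (fun I => @Set.toFinset _ {w | C.Adj v w} I) (Subsingleton.elim _ _)
    rw [h3, hC.2.2 v hv]
    rfl
  · have h3 : (Finset.univ.filter (fun w => C.Adj v w)) = ∅ := by
      ext w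
      simp only [Finset.mem_filter, Finset.mem_univ, true_and, Finset.notMem_empty, iff_false]
      intro hadj
      exact hv (C.edge_vert hadj)
    rw [h3]
    rfl


section Zeroing
variable {x : Sym2 (V k) → ZMod 2}
  (h0 : ∀ e, e ∉ (ladder (k+1)).edgeSet → x e = 0)
  (h1 : ∀ v : V k, ∑ e ∈ incEdges v, x e = 0)
  (hside : ∀ a b : Fin (k+1), (a : ℕ) + 1 = (b : ℕ) → x s((a, false), (b, false)) = 0)

include h0 h1 hside

/-- If every incident edge of `v` other than `e0` vanishes, so does `e0`. -/
lemma single_edge (v : V k) (e0 : Sym2 (V k)) (he0 : v ∈ e0)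
    (h : ∀ w : V k, (ladder (k+1)).Adj v w → s(v, w) ≠ e0 → x s(v, w) = 0) :
    x e0 = 0 := by
  have := h1 v
  rwa [Finset.sum_eq_single_of_mem e0 (mem_incEdges.2 he0)] at this
  intro e he hne
  by_cases hE : e ∈ (ladder (k+1)).edgeSet
  · rw [mem_incEdges] at he
    induction e with
    | _ a b =>
      rw [SimpleGraph.mem_edgeSet] at hE
      rcases Sym2.mem_iff.1 he with rfl | rfl
      · exact h b hE hne
      · rw [Sym2.eq_swap]
        rw [Sym2.eq_swap] at hne
        exact h a hE.symm hne
  · exact h0 e hE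

lemma rung_zero (i : Fin (k+1)) : x s((i, false), (i, true)) = 0 := by
  apply single_edge h0 h1 hside ((i, false)) _ (Sym2.mem_mk_left _ _)
  intro w hadj hne
  rcases adj_cases hadj with ⟨hw1, hw2⟩ | ⟨hw2, hc | hc⟩
  · exfalso
    apply hne
    rw [(pmk hw1 hw2 : w = (i, true))]
  · have hc' : (w.1 : ℕ) = (i : ℕ) + 1 := hc
    rw [(pmk rfl hw2 : w = (w.1, false))]
    exact hside i w.1 hc'.symm
  · have hc' : (i : ℕ) = (w.1 : ℕ) + 1 := hc
    rw [(pmk rfl hw2 : w = (w.1, false)), Sym2.eq_swap]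
    exact hside w.1 i hc'.symm

lemma trueside_zero : ∀ (d : ℕ) (a b : Fin (k+1)), (a : ℕ) + 1 = (b : ℕ) →
    k - (b : ℕ) ≤ d → x s((a, true), (b, true)) = 0 := by
  intro d
  induction d with
  | zero =>
    intro a b hab hd
    apply single_edge h0 h1 hside ((b, true)) _ (Sym2.mem_mk_right _ _)
    intro w hadj hne
    rcases adj_cases hadj with ⟨hw1, hw2⟩ | ⟨hw2, hc | hc⟩
    · -- w = (b, false) : rung
      have hw : w = (b, false) := pmk hw1 hw2
      rw [hw, Sym2.eq_swap]
      exact rung_zero h0 h1 hside b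
    · -- w above b : impossible since b = k
      exfalso
      have hc' : (w.1 : ℕ) = (b : ℕ) + 1 := hc
      have := w.1.isLt
      have := b.isLt
      omega
    · -- w below b : w = (a,true), edge is e0
      exfalso
      apply hne
      have hc' : (b : ℕ) = (w.1 : ℕ) + 1 := hc
      have hw1 : w.1 = a := by
        apply Fin.ext
        omega
      have hw : w = (a, true) := pmk hw1 hw2
      rw [hw, Sym2.eq_swap]
  | succ d ih =>
    intro a b hab hd
    apply single_edge h0 h1 hside ((b, true)) _ (Sym2.mem_mk_right _ _)
    intro w hadj hne
    rcases adj_cases hadj with ⟨hw1, hw2⟩ | ⟨hw2, hc | hc⟩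
    · have hw : w = (b, false) := pmk hw1 hw2
      rw [hw, Sym2.eq_swap]
      exact rung_zero h0 h1 hside b
    · have hc' : (w.1 : ℕ) = (b : ℕ) + 1 := hc
      have hw : w = (w.1, true) := pmk rfl hw2
      rw [hw]
      have := w.1.isLt
      exact ih b w.1 hc'.symm (by omega)
    · exfalso
      apply hne
      have hc' : (b : ℕ) = (w.1 : ℕ) + 1 := hc
      have hw1 : w.1 = a := by
        apply Fin.ext
        omega
      have hw : w = (a, true) := pmk hw1 hw2
      rw [hw, Sym2.eq_swap]

lemma zeroing : x = 0 := by
  funext e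
  by_cases hE : e ∈ (ladder (k+1)).edgeSet
  · induction e with
    | _ p q =>
      rw [SimpleGraph.mem_edgeSet] at hE
      rcases adj_cases hE with ⟨hw1, hw2⟩ | ⟨hw2, hc | hc⟩
      · -- rung
        have hq : q = (p.1, !p.2) := pmk hw1 hw2
        subst hq
        have hp : p = (p.1, p.2) := rfl
        cases hb : p.2 with
        | false =>
          have : p = (p.1, false) := pmk rfl hb
          rw [this]
          simpa using rung_zero h0 h1 hside p.1
        | true =>
          have : p = (p.1, true) := pmk rfl hb
          rw [this]
          simp only [Bool.not_true]
          rw [Sym2.eq_swap]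
          exact rung_zero h0 h1 hside p.1
      · -- side, q above p
        have hq : q = (q.1, p.2) := pmk rfl hw2
        rw [hq]
        have hp : p = (p.1, p.2) := rfl
        cases hb : p.2 with
        | false =>
          rw [show p = (p.1, false) from pmk rfl hb] at hq ⊢
          exact hside p.1 q.1 hc.symm
        | true =>
          rw [show p = (p.1, true) from pmk rfl hb] at hq ⊢
          exact trueside_zero h0 h1 hside k p.1 q.1 hc.symm (by omega)
      · -- side, p above q
        have hq : q = (q.1, p.2) := pmk rfl hw2
        rw [hq, Sym2.eq_swap]
        cases hb : p.2 with
        | false =>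
          rw [show p = (p.1, false) from pmk rfl hb]
          exact hside q.1 p.1 hc.symm
        | true =>
          rw [show p = (p.1, true) from pmk rfl hb]
          exact trueside_zero h0 h1 hside k q.1 p.1 hc.symm (by omega)
  · exact (h0 e hE)

end Zeroing

section Squares
variable (i : Fin k)

/-- the square between columns `i` and `i+1` -/
def sq (i : Fin k) : (ladder (k+1)).Subgraph where
  verts := {(i.castSucc, false), (i.castSucc, true), (i.succ, false), (i.succ, true)}
  Adj p q :=
    (p = (i.castSucc, false) ∧ q = (i.castSucc, true)) ∨
    (p = (i.castSucc, true) ∧ q = (i.castSucc, false)) ∨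
    (p = (i.succ, false) ∧ q = (i.succ, true)) ∨
    (p = (i.succ, true) ∧ q = (i.succ, false)) ∨
    (p = (i.castSucc, false) ∧ q = (i.succ, false)) ∨
    (p = (i.succ, false) ∧ q = (i.castSucc, false)) ∨
    (p = (i.castSucc, true) ∧ q = (i.succ, true)) ∨
    (p = (i.succ, true) ∧ q = (i.castSucc, true))
  adj_sub := by
    have hcs : (i.castSucc : ℕ) + 1 = (i.succ : ℕ) := by simp
    rintro p q (⟨rfl, rfl⟩ | ⟨rfl, rfl⟩ | ⟨rfl, rfl⟩ | ⟨rfl, rfl⟩ | ⟨rfl, rfl⟩ |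
      ⟨rfl, rfl⟩ | ⟨rfl, rfl⟩ | ⟨rfl, rfl⟩)
    · exact adj_rung i.castSucc false
    · exact (adj_rung i.castSucc false).symm
    · exact adj_rung i.succ false
    · exact (adj_rung i.succ false).symm
    · exact adj_side hcs false
    · exact (adj_side hcs false).symm
    · exact adj_side hcs true
    · exact (adj_side hcs true).symm
  edge_vert := by
    rintro p q (⟨rfl, rfl⟩ | ⟨rfl, rfl⟩ | ⟨rfl, rfl⟩ | ⟨rfl, rfl⟩ | ⟨rfl, rfl⟩ |
      ⟨rfl, rfl⟩ | ⟨rfl, rfl⟩ | ⟨rfl, rfl⟩) <;> simp [Set.mem_insert_iff]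
  symm := by
    constructor
    rintro p q (⟨rfl, rfl⟩ | ⟨rfl, rfl⟩ | ⟨rfl, rfl⟩ | ⟨rfl, rfl⟩ | ⟨rfl, rfl⟩ |
      ⟨rfl, rfl⟩ | ⟨rfl, rfl⟩ | ⟨rfl, rfl⟩) <;> tauto

lemma sq_ne1 : ((i.castSucc : Fin (k+1)), false) ≠ (i.castSucc, true) := by
  intro h; simpa using congrArg Prod.snd h

lemma sq_ne2 : ((i.castSucc : Fin (k+1)), (s : Bool)) ≠ (i.succ, s) := by
  intro h
  have := congrArg (fun p => ((Prod.fst p : Fin (k+1)) : ℕ)) h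
  simp at this

lemma ne_of_snd {p q : V k} (h : p.2 ≠ q.2) : p ≠ q := fun hh => h (congrArg Prod.snd hh)

lemma sq_adj_iff (p q : V k) : (sq i).Adj p q ↔
    ((p = (i.castSucc, false) ∧ q = (i.castSucc, true)) ∨
    (p = (i.castSucc, true) ∧ q = (i.castSucc, false)) ∨
    (p = (i.succ, false) ∧ q = (i.succ, true)) ∨
    (p = (i.succ, true) ∧ q = (i.succ, false)) ∨
    (p = (i.castSucc, false) ∧ q = (i.succ, false)) ∨
    (p = (i.succ, false) ∧ q = (i.castSucc, false)) ∨
    (p = (i.castSucc, true) ∧ q = (i.succ, true)) ∨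
    (p = (i.succ, true) ∧ q = (i.castSucc, true))) := Iff.rfl

lemma pair_injective : Function.Injective (fun p : V k => ((p.1 : ℕ), p.2)) := by
  rintro ⟨a, b⟩ ⟨c, d⟩ h
  simp only [Prod.mk.injEq] at h
  exact pmk (Fin.ext h.1) h.2

lemma sq_neighbors : ∀ v ∈ (sq i).verts, ∃ a b : V k, a ≠ b ∧ (sq i).neighborSet v = {a, b} := by
  have hne : ((i.castSucc : ℕ), false) ≠ ((i.succ : ℕ), false) := by simp
  intro v hv
  simp only [sq, Set.mem_insert_iff, Set.mem_singleton_iff] at hv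
  rcases hv with rfl | rfl | rfl | rfl
  · refine ⟨(i.castSucc, true), (i.succ, false), ne_of_snd (by simp), ?_⟩
    ext w
    rw [SimpleGraph.Subgraph.mem_neighborSet, sq_adj_iff]
    simp only [Set.mem_insert_iff, Set.mem_singleton_iff]
    constructor
    · rintro (⟨h1, rfl⟩ | ⟨h1, rfl⟩ | ⟨h1, rfl⟩ | ⟨h1, rfl⟩ | ⟨h1, rfl⟩ | ⟨h1, rfl⟩ |
        ⟨h1, rfl⟩ | ⟨h1, rfl⟩) <;>
        first
          | (left; rfl)
          | (right; rfl)
          | (exact absurd (congrArg (fun p : V k => ((p.1 : ℕ), p.2)) h1) (by simp))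
    · rintro (rfl | rfl) <;> simp
  · refine ⟨(i.castSucc, false), (i.succ, true), ne_of_snd (by simp), ?_⟩
    ext w
    rw [SimpleGraph.Subgraph.mem_neighborSet, sq_adj_iff]
    simp only [Set.mem_insert_iff, Set.mem_singleton_iff]
    constructor
    · rintro (⟨h1, rfl⟩ | ⟨h1, rfl⟩ | ⟨h1, rfl⟩ | ⟨h1, rfl⟩ | ⟨h1, rfl⟩ | ⟨h1, rfl⟩ |
        ⟨h1, rfl⟩ | ⟨h1, rfl⟩) <;>
        first
          | (left; rfl)
          | (right; rfl)
          | (exact absurd (congrArg (fun p : V k => ((p.1 : ℕ), p.2)) h1) (by simp))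
    · rintro (rfl | rfl) <;> simp
  · refine ⟨(i.succ, true), (i.castSucc, false), ne_of_snd (by simp), ?_⟩
    ext w
    rw [SimpleGraph.Subgraph.mem_neighborSet, sq_adj_iff]
    simp only [Set.mem_insert_iff, Set.mem_singleton_iff]
    constructor
    · rintro (⟨h1, rfl⟩ | ⟨h1, rfl⟩ | ⟨h1, rfl⟩ | ⟨h1, rfl⟩ | ⟨h1, rfl⟩ | ⟨h1, rfl⟩ |
        ⟨h1, rfl⟩ | ⟨h1, rfl⟩) <;>
        first
          | (left; rfl)
          | (right; rfl)
          | (exact absurd (congrArg (fun p : V k => ((p.1 : ℕ), p.2)) h1) (by simp))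
    · rintro (rfl | rfl) <;> simp
  · refine ⟨(i.succ, false), (i.castSucc, true), ne_of_snd (by simp), ?_⟩
    ext w
    rw [SimpleGraph.Subgraph.mem_neighborSet, sq_adj_iff]
    simp only [Set.mem_insert_iff, Set.mem_singleton_iff]
    constructor
    · rintro (⟨h1, rfl⟩ | ⟨h1, rfl⟩ | ⟨h1, rfl⟩ | ⟨h1, rfl⟩ | ⟨h1, rfl⟩ | ⟨h1, rfl⟩ |
        ⟨h1, rfl⟩ | ⟨h1, rfl⟩) <;>
        first
          | (left; rfl)
          | (right; rfl)
          | (exact absurd (congrArg (fun p : V k => ((p.1 : ℕ), p.2)) h1) (by simp))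
    · rintro (rfl | rfl) <;> simp

lemma sq_cycle : IsCycleSubgraph (sq i) := by
  refine ⟨Set.toFinite _, ?_, ?_⟩
  · rw [SimpleGraph.Subgraph.connected_iff]
    constructor
    · have hmA : ((i.castSucc : Fin (k+1)), false) ∈ (sq i).verts := by simp [sq]
      have hmB : ((i.castSucc : Fin (k+1)), true) ∈ (sq i).verts := by simp [sq]
      have hmC : ((i.succ : Fin (k+1)), false) ∈ (sq i).verts := by simp [sq]
      have hmD : ((i.succ : Fin (k+1)), true) ∈ (sq i).verts := by simp [sq]
      have hAB : (sq i).coe.Adj ⟨_, hmA⟩ ⟨_, hmB⟩ := by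
        rw [SimpleGraph.Subgraph.coe_adj]; left; exact ⟨rfl, rfl⟩
      have hAC : (sq i).coe.Adj ⟨_, hmA⟩ ⟨_, hmC⟩ := by
        rw [SimpleGraph.Subgraph.coe_adj]
        right; right; right; right; left; exact ⟨rfl, rfl⟩
      have hCD : (sq i).coe.Adj ⟨_, hmC⟩ ⟨_, hmD⟩ := by
        rw [SimpleGraph.Subgraph.coe_adj]
        right; right; left; exact ⟨rfl, rfl⟩
      have key : ∀ u : (sq i).verts, (sq i).coe.Reachable ⟨_, hmA⟩ u := by
        rintro ⟨u, hu⟩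
        simp only [sq, Set.mem_insert_iff, Set.mem_singleton_iff] at hu
        rcases hu with rfl | rfl | rfl | rfl
        · exact Reachable.refl _
        · exact hAB.reachable
        · exact hAC.reachable
        · exact hAC.reachable.trans hCD.reachable
      exact ⟨fun u v => (key u).symm.trans (key v)⟩
    · exact ⟨(i.castSucc, false), Set.mem_insert _ _⟩
  · intro v hv
    obtain ⟨a, b, hab, hset⟩ := sq_neighbors i v hv
    rw [hset]
    exact Set.ncard_pair hab

end Squares

/-- the false-side edge from column `i` to `i+1` -/
def fs (i : Fin k) : Sym2 (V k) := s((i.castSucc, false), (i.succ, false))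

lemma sq_adj_fs (i i' : Fin k) :
    (sq i').Adj (i.castSucc, false) (i.succ, false) ↔ i' = i := by
  constructor
  · rw [sq_adj_iff]
    rintro (h | h | h | h | h | h | h | h) <;>
    · obtain ⟨h1, h2⟩ := h
      have e1 := congrArg (fun p : V k => ((p.1 : ℕ), p.2)) h1
      have e2 := congrArg (fun p : V k => ((p.1 : ℕ), p.2)) h2
      simp only [Fin.coe_castSucc, Fin.val_succ, Prod.mk.injEq] at e1 e2
      all_goals exact Fin.ext (by omega)
  · rintro rfl
    rw [sq_adj_iff]
    exact Or.inr (Or.inr (Or.inr (Or.inr (Or.inl ⟨rfl, rfl⟩))))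

lemma edgeVec_sq (i i' : Fin k) :
    edgeVec (sq i') (fs i) = if i' = i then 1 else 0 := by
  simp only [edgeVec, fs, SimpleGraph.Subgraph.mem_edgeSet]
  by_cases h : i' = i <;> simp [sq_adj_fs, h]

lemma sq_linIndep : LinearIndependent (ZMod 2) (fun i : Fin k => edgeVec (sq i)) := by
  rw [Fintype.linearIndependent_iff]
  intro g hg i
  have := congrFun hg (fs i)
  simp only [Finset.sum_apply, Pi.smul_apply, smul_eq_mul, Pi.zero_apply] at this
  rw [Finset.sum_eq_single_of_mem i (Finset.mem_univ i)] at this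
  · rwa [edgeVec_sq, if_pos rfl, mul_one] at this
  · intro b _ hb
    rw [edgeVec_sq, if_neg hb, mul_zero]

lemma card_ge (B : Finset ((ladder (k+1)).Subgraph))
    (h : ∀ i : Fin k, edgeVec (sq i) ∈
      Submodule.span (ZMod 2) (edgeVec '' (↑B : Set ((ladder (k+1)).Subgraph)))) :
    k ≤ B.card := by
  classical
  set W := Submodule.span (ZMod 2) (edgeVec '' (↑B : Set ((ladder (k+1)).Subgraph))) with hW
  have hfin : FiniteDimensional (ZMod 2) W :=
    FiniteDimensional.span_of_finite _ ((B.finite_toSet).image _)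
  have hli : LinearIndependent (ZMod 2) (fun i : Fin k => (⟨edgeVec (sq i), h i⟩ : W)) := by
    apply LinearIndependent.of_comp W.subtype
    exact sq_linIndep
  have h1 : k ≤ Module.finrank (ZMod 2) W := by
    simpa using hli.fintype_card_le_finrank
  have himg : edgeVec '' (↑B : Set ((ladder (k+1)).Subgraph)) =
      ↑(B.image edgeVec) := (Finset.coe_image).symm
  have h2 : Module.finrank (ZMod 2) W ≤ (B.image edgeVec).card := by
    rw [hW, himg]
    exact finrank_span_finset_le_card _
  exact h1.trans (h2.trans (Finset.card_image_le))

open Classical in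
lemma card_filter_le (j : ℕ) (hj : j ≤ k) (B : Finset ((ladder (k+1)).Subgraph))
    (hcyc : ∀ C ∈ B, IsCycleSubgraph C)
    (hli : LinearIndependent (ZMod 2)
      (fun C : (↑B : Set ((ladder (k+1)).Subgraph)) => edgeVec C.1)) :
    (B.filter (fun C => ∀ v ∈ C.verts, (v.1 : ℕ) < j)).card ≤ j := by
  classical
  set B' := B.filter (fun C => ∀ v ∈ C.verts, (v.1 : ℕ) < j) with hB'
  -- the false-side edges indexed by `Fin j`
  have hm1 : ∀ m : Fin j, (m : ℕ) < k + 1 := fun m => by omega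
  have hm2 : ∀ m : Fin j, (m : ℕ) + 1 < k + 1 := fun m => by
    have := m.isLt; omega
  set fsj : Fin j → Sym2 (V k) :=
    fun m => s(((⟨m, hm1 m⟩ : Fin (k+1)), false), ((⟨(m : ℕ) + 1, hm2 m⟩ : Fin (k+1)), false))
    with hfsj
  set T : (Sym2 (V k) → ZMod 2) →ₗ[ZMod 2] (Fin j → ZMod 2) :=
    LinearMap.pi (fun m => LinearMap.proj (fsj m)) with hT
  have hu : LinearIndependent (ZMod 2) (fun C : ↥B' => T (edgeVec C.1)) := by
    rw [Fintype.linearIndependent_iff]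
    intro g hg
    set y : Sym2 (V k) → ZMod 2 := ∑ C : ↥B', g C • edgeVec C.1 with hy
    have hmemB : ∀ C : ↥B', C.1 ∈ B := fun C => (Finset.mem_filter.1 C.2).1
    have hsmall : ∀ C : ↥B', ∀ v ∈ (C.1 : (ladder (k+1)).Subgraph).verts, (v.1 : ℕ) < j :=
      fun C => (Finset.mem_filter.1 C.2).2
    have hTy : T y = 0 := by
      rw [hy, map_sum]
      simpa [map_smul] using hg
    have hy0 : y = 0 := by
      apply zeroing (x := y)
      · intro e he
        rw [hy, Finset.sum_apply]
        apply Finset.sum_eq_zero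
        intro C _
        have : edgeVec (C.1 : (ladder (k+1)).Subgraph) e = 0 := by
          rw [edgeVec, if_neg]
          intro hmem
          exact he ((C.1 : (ladder (k+1)).Subgraph).edgeSet_subset hmem)
        simp [this]
      · intro v
        rw [← phi_apply, hy, map_sum]
        apply Finset.sum_eq_zero
        intro C _
        rw [map_smul, parity_cycle (hcyc C.1 (hmemB C)) v, smul_zero]
      · intro a b hab
        by_cases ha : (a : ℕ) < j
        · have := congrFun hTy ⟨(a : ℕ), ha⟩
          simp only [hT, LinearMap.pi_apply, LinearMap.proj_apply, Pi.zero_apply, hfsj] at this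
          rw [show ((⟨((⟨(a : ℕ), ha⟩ : Fin j) : ℕ), hm1 ⟨(a : ℕ), ha⟩⟩ : Fin (k+1))) = a
              from Fin.ext rfl,
            show ((⟨((⟨(a : ℕ), ha⟩ : Fin j) : ℕ) + 1, hm2 ⟨(a : ℕ), ha⟩⟩ : Fin (k+1))) = b
              from Fin.ext hab] at this
          exact this
        · rw [hy, Finset.sum_apply]
          apply Finset.sum_eq_zero
          intro C _
          have : edgeVec (C.1 : (ladder (k+1)).Subgraph) s((a, false), (b, false)) = 0 := by
            rw [edgeVec, if_neg]
            intro hmem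
            have hadj := SimpleGraph.Subgraph.mem_edgeSet.1 hmem
            exact ha (hsmall C _ ((C.1 : (ladder (k+1)).Subgraph).edge_vert hadj))
          simp [this]
    -- conclude coefficients vanish using linear independence over B
    set finc : ↥B' → (↑B : Set ((ladder (k+1)).Subgraph)) :=
      fun C => ⟨C.1, Finset.mem_coe.2 (hmemB C)⟩ with hfinc
    have hinc : Function.Injective finc := by
      rintro ⟨C, hC⟩ ⟨C', hC'⟩ h
      have : C = C' := Subtype.ext_iff.1 h
      exact Subtype.ext this
    have hli' := hli.comp finc hinc
    exact Fintype.linearIndependent_iff.1 hli' g (hy ▸ hy0)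
  have := hu.fintype_card_le_finrank
  rwa [Module.finrank_pi, Fintype.card_coe, Fintype.card_fin] at this

lemma exists_cross {C : (ladder (k+1)).Subgraph} {a b : ↥C.verts} (w : C.coe.Walk a b) :
    ∀ i : ℕ, ((a : V k).1 : ℕ) ≤ i → i < ((b : V k).1 : ℕ) →
      ∃ p q : V k, C.Adj p q ∧ (p.1 : ℕ) = i ∧ (q.1 : ℕ) = i + 1 := by
  induction w with
  | nil => intro i h1 h2; omega
  | @cons u v w h p ih =>
    intro i h1 h2
    have hadj : C.Adj u.1 v.1 := (SimpleGraph.Subgraph.coe_adj C u v) ▸ h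
    have hG := C.adj_sub hadj
    by_cases hle : ((v : V k).1 : ℕ) ≤ i
    · exact ih i hle h2
    · rcases adj_cases hG with ⟨hw1, _⟩ | ⟨_, hc | hc⟩
      · exfalso
        have : ((v : V k).1 : ℕ) = ((u : V k).1 : ℕ) := congrArg Fin.val hw1
        omega
      · refine ⟨u.1, v.1, hadj, by omega, by omega⟩
      · exfalso; omega

lemma length_ge {C : (ladder (k+1)).Subgraph} (hconn : C.Connected)
    (hroot : (((0 : Fin (k+1))), false) ∈ C.verts)
    {j : ℕ} (hreach : ∃ v ∈ C.verts, j ≤ (v.1 : ℕ)) :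
    j ≤ C.edgeSet.ncard := by
  classical
  obtain ⟨v, hv, hjv⟩ := hreach
  obtain ⟨w⟩ := hconn.coe.preconnected ⟨((0 : Fin (k+1)), false), hroot⟩ ⟨v, hv⟩
  have hcross : ∀ i, i < j → ∃ p q : V k, C.Adj p q ∧ (p.1 : ℕ) = i ∧ (q.1 : ℕ) = i + 1 := by
    intro i hi
    exact exists_cross w i (by simp) (lt_of_lt_of_le hi hjv)
  choose p q hpq hp hq using hcross
  have hfin : C.edgeSet.Finite := Set.toFinite _
  have : (Finset.range j).card ≤ hfin.toFinset.card := by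
    apply Finset.card_le_card_of_injOn
      (fun i => if hi : i < j then s(p i hi, q i hi) else default)
    · intro i hi
      rw [Finset.mem_coe, Finset.mem_range] at hi
      simp only [Finset.mem_coe]
      rw [dif_pos hi, Set.Finite.mem_toFinset]
      exact SimpleGraph.Subgraph.mem_edgeSet.2 (hpq i hi)
    · intro i hi i' hi' hii
      rw [Finset.mem_coe, Finset.mem_range] at hi hi'
      simp only [dif_pos hi, dif_pos hi'] at hii
      rw [Sym2.eq_iff] at hii
      rcases hii with ⟨h1, h2⟩ | ⟨h1, h2⟩
      · have e1 := (congrArg (fun z : V k => (z.1 : ℕ)) h1).trans (hp i' hi')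
        rw [hp i hi] at e1
        omega
      · have e1 := (congrArg (fun z : V k => (z.1 : ℕ)) h1).trans (hq i' hi')
        have e2 := (congrArg (fun z : V k => (z.1 : ℕ)) h2).trans (hp i' hi')
        rw [hp i hi] at e1
        rw [hq i hi] at e2
        omega
  rwa [Finset.card_range, ← Set.ncard_eq_toFinset_card _ hfin] at this

end Stmt15

/-- Every cycle basis of the ladder graph rooted at its end rung
has total length `Ω(n²)`: there is a constant `c > 0` such that, for all
sufficiently large ladders, the sum of the lengths of the cycles of any rooted
cycle basis is at least `c` times the square of the number of vertices. -/
theorem stmt15 :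
    ∃ c : ℝ, 0 < c ∧ ∃ N : ℕ, ∀ k : ℕ, N ≤ k →
      ∀ B : Finset ((ladder (k + 1)).Subgraph),
        IsCycleBasis (↑B : Set ((ladder (k + 1)).Subgraph)) →
        (∀ C ∈ B, s(((0 : Fin (k + 1)), false), ((0 : Fin (k + 1)), true)) ∈
          C.edgeSet) →
        c * ((2 * (k + 1) : ℕ) ^ 2 : ℝ) ≤ ∑ C ∈ B, ((C.edgeSet.ncard : ℝ)) := by
  classical
  refine ⟨1/32, by norm_num, 3, ?_⟩
  intro k hk B hbasis hroot
  obtain ⟨hcyc, hli, hspan⟩ := hbasis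
  have hBk : k ≤ B.card := by
    apply Stmt15.card_ge
    intro i
    rw [hspan]
    exact Submodule.subset_span ⟨Stmt15.sq i, Stmt15.sq_cycle i, rfl⟩
  set total : ℕ := ∑ C ∈ B, C.edgeSet.ncard with htotal
  have hlen : ∀ C ∈ B,
      ((Finset.Icc 1 k).filter (fun j => ∃ v ∈ C.verts, j ≤ (v.1 : ℕ))).card ≤
        C.edgeSet.ncard := by
    intro C hC
    set S := (Finset.Icc 1 k).filter (fun j => ∃ v ∈ C.verts, j ≤ (v.1 : ℕ)) with hS
    by_cases hne : S.Nonempty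
    · have hm : S.max' hne ∈ (Finset.Icc 1 k).filter
          (fun j => ∃ v ∈ C.verts, j ≤ (v.1 : ℕ)) := S.max'_mem hne
      rw [Finset.mem_filter] at hm
      have h1 : S.card ≤ S.max' hne := by
        have hsub : S ⊆ Finset.Icc 1 (S.max' hne) := by
          intro j hj
          rw [Finset.mem_Icc]
          refine ⟨(Finset.mem_Icc.1 (Finset.mem_filter.1 hj).1).1, S.le_max' j hj⟩
        calc S.card ≤ (Finset.Icc 1 (S.max' hne)).card := Finset.card_le_card hsub
          _ ≤ S.max' hne := by rw [Nat.card_Icc]; omega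
      refine h1.trans (Stmt15.length_ge (hcyc C hC).2.1 ?_ hm.2)
      exact C.edge_vert (SimpleGraph.Subgraph.mem_edgeSet.1 (hroot C hC))
    · rw [Finset.not_nonempty_iff_eq_empty] at hne
      rw [hne, Finset.card_empty]
      exact Nat.zero_le _
  have hcol : ∀ j ∈ Finset.Icc 1 k,
      k - j ≤ (B.filter (fun C => ∃ v ∈ C.verts, j ≤ (v.1 : ℕ))).card := by
    intro j hj
    rw [Finset.mem_Icc] at hj
    have hsplit := Finset.card_filter_add_card_filter_not
      (s := B) (p := fun C => ∃ v ∈ C.verts, j ≤ (v.1 : ℕ))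
    have hneg : (B.filter (fun C => ¬ ∃ v ∈ C.verts, j ≤ (v.1 : ℕ))).card ≤ j := by
      have heq : (B.filter (fun C => ¬ ∃ v ∈ C.verts, j ≤ (v.1 : ℕ)))
          = B.filter (fun C => ∀ v ∈ C.verts, (v.1 : ℕ) < j) := by
        apply Finset.filter_congr
        intro C _
        push_neg
        rfl
      rw [heq]
      exact Stmt15.card_filter_le j hj.2 B (fun C hC => hcyc C hC) hli
    omega
  have hdc : ∑ j ∈ Finset.Icc 1 k, (B.filter (fun C => ∃ v ∈ C.verts, j ≤ (v.1 : ℕ))).card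
      = ∑ C ∈ B, ((Finset.Icc 1 k).filter (fun j => ∃ v ∈ C.verts, j ≤ (v.1 : ℕ))).card := by
    simp only [Finset.card_filter]
    rw [Finset.sum_comm]
  have key : ∑ j ∈ Finset.Icc 1 k, (k - j) ≤ total := by
    calc ∑ j ∈ Finset.Icc 1 k, (k - j)
        ≤ ∑ j ∈ Finset.Icc 1 k,
            (B.filter (fun C => ∃ v ∈ C.verts, j ≤ (v.1 : ℕ))).card :=
          Finset.sum_le_sum hcol
      _ = ∑ C ∈ B, ((Finset.Icc 1 k).filter (fun j => ∃ v ∈ C.verts, j ≤ (v.1 : ℕ))).card := hdc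
      _ ≤ total := Finset.sum_le_sum hlen
  have hgauss : ∑ j ∈ Finset.Icc 1 k, (k - j) = ∑ i ∈ Finset.range k, i := by
    apply Finset.sum_nbij' (i := fun j => k - j) (j := fun i => k - i)
    · intro j hj
      rw [Finset.mem_Icc] at hj
      rw [Finset.mem_range]
      omega
    · intro i hi
      rw [Finset.mem_range] at hi
      rw [Finset.mem_Icc]
      omega
    · intro j hj
      rw [Finset.mem_Icc] at hj
      omega
    · intro i hi
      rw [Finset.mem_range] at hi
      omega
    · intro j hj
      rfl
  have hfinal : k * (k - 1) ≤ 2 * total := by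
    have := Finset.sum_range_id_mul_two k
    omega
  have hcast : ∑ C ∈ B, ((C.edgeSet.ncard : ℝ)) = (total : ℝ) := by
    rw [htotal]
    push_cast
    rfl
  rw [hcast]
  have hk1 : (1 : ℕ) ≤ k := by omega
  have hR : (k : ℝ) * ((k : ℝ) - 1) ≤ 2 * (total : ℝ) := by
    have := hfinal
    have hcast2 : ((k * (k - 1) : ℕ) : ℝ) = (k : ℝ) * ((k : ℝ) - 1) := by
      push_cast [Nat.cast_sub hk1]
      ring
    calc (k : ℝ) * ((k : ℝ) - 1) = ((k * (k - 1) : ℕ) : ℝ) := hcast2.symm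
      _ ≤ ((2 * total : ℕ) : ℝ) := by exact_mod_cast hfinal
      _ = 2 * (total : ℝ) := by push_cast; ring
  have hkR : (3 : ℝ) ≤ (k : ℝ) := by exact_mod_cast hk
  push_cast
  nlinarith [hR, hkR]
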